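/- For the single grain-error channel, the weight assignment on {0,1}^n given by w_x = 1/ρ(x) if μ(x) ≤ 1 and w_x = (1/ρ(x))·(1 - μ(x)/ρ(x)²) otherwise, is a fractional transversal: for every x ∈ {0,1}^n, Σ_{y ∈ B_{G,1}(x)} w_y ≥ 1. -/

import Mathlib

/-- Extend a length-`n` binary word to `ℕ → Bool` (by `false` beyond `n`). -/
def ext (n : ℕ) (y : Fin n → Bool) : ℕ → Bool :=
  fun i => if h : i < n then y ⟨i, h⟩ else false

/-- `rho n x`: the number of runs of the length-`n` word `x`. -/
def rho (n : ℕ) (x : ℕ → Bool) : ℕ :=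
  1 + ((Finset.range (n - 1)).filter (fun i => x i ≠ x (i + 1))).card

/-- `mu n x`: the number of middle runs of length 1 of the length-`n` word `x`. -/
def mu (n : ℕ) (x : ℕ → Bool) : ℕ :=
  ((Finset.Icc 1 (n - 2)).filter
    (fun i => x (i - 1) ≠ x i ∧ x i ≠ x (i + 1))).card

/-- The weight assigned to a length-`m` word `y`: `1/ρ(y)` if `μ(y) ≤ 1`, and
`(1/ρ(y))(1 - μ(y)/ρ(y)²)` otherwise. -/
noncomputable def wt (m : ℕ) (y : Fin m → Bool) : ℝ :=
  if mu m (ext m y) ≤ 1 then 1 / (rho m (ext m y) : ℝ)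
  else (1 / (rho m (ext m y) : ℝ)) * (1 - (mu m (ext m y) : ℝ) / (rho m (ext m y) : ℝ) ^ 2)

/-- The single grain-error ball `B_{G,1}(x) ⊆ {0,1}^n`: `x` together with all
flips of a position `i ≥ 1` (0-indexed) whose symbol differs from the previous
one. -/
def ballG (n : ℕ) (x : Fin n → Bool) : Finset (Fin n → Bool) :=
  insert x
    (((Finset.Ico 1 n).filter (fun i => ext n x i ≠ ext n x (i - 1))).image
      (fun i => fun j : Fin n => if (j : ℕ) = i then !(x j) else x j))

-- boundary set
def Bd (n : ℕ) (x : ℕ → Bool) : Finset ℕ :=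
  (Finset.range (n - 1)).filter (fun j => x j ≠ x (j + 1))

def Md (n : ℕ) (x : ℕ → Bool) : Finset ℕ :=
  (Finset.Icc 1 (n - 2)).filter (fun i => x (i - 1) ≠ x i ∧ x i ≠ x (i + 1))

lemma rho_eq (n : ℕ) (x : ℕ → Bool) : rho n x = 1 + (Bd n x).card := rfl
lemma mu_eq (n : ℕ) (x : ℕ → Bool) : mu n x = (Md n x).card := rfl

lemma bool_ne : ∀ {a b : Bool}, a ≠ b → b = !a := by decide

section upd
variable {n i : ℕ} {X : ℕ → Bool}

/-- middle-run flip: rho drops by exactly 2 -/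
lemma Bd_update_middle (h1 : 1 ≤ i) (hin : i < n - 1)
    (hb : X i ≠ X (i - 1)) (hm : X i ≠ X (i + 1)) :
    Bd n (Function.update X i (!(X i))) = ((Bd n X).erase (i-1)).erase i := by
  have hb' := bool_ne hb
  have hm' := bool_ne hm
  ext j
  simp only [Bd, Finset.mem_filter, Finset.mem_erase, Finset.mem_range]
  by_cases hji : j = i
  · subst hji
    rw [Function.update_self, Function.update_of_ne (by omega : j + 1 ≠ j), hm']
    simp
  · by_cases hji1 : j = i - 1
    · subst hji1
      have hh : i - 1 + 1 = i := by omega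
      rw [Function.update_of_ne (by omega : i - 1 ≠ i), hh, Function.update_self, hb']
      simp
    · rw [Function.update_of_ne hji, Function.update_of_ne (by omega : j + 1 ≠ i)]
      tauto
end upd

lemma Bd_update_last (h1 : 1 ≤ i) (h2 : i < n) (hin : ¬ (i < n - 1))
    (hb : X i ≠ X (i - 1)) :
    Bd n (Function.update X i (!(X i))) = (Bd n X).erase (i-1) := by
  have hb' := bool_ne hb
  ext j
  simp only [Bd, Finset.mem_filter, Finset.mem_erase, Finset.mem_range]
  by_cases hji : j = i
  · subst hji
    constructor
    · rintro ⟨h, -⟩; omega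
    · rintro ⟨-, h, -⟩; omega
  · by_cases hji1 : j = i - 1
    · subst hji1
      have hh : i - 1 + 1 = i := by omega
      rw [Function.update_of_ne (by omega : i - 1 ≠ i), hh, Function.update_self, hb']
      simp
    · rw [Function.update_of_ne hji, Function.update_of_ne (by omega : j + 1 ≠ i)]
      tauto

lemma Bd_update_move (h1 : 1 ≤ i) (hin : i < n - 1)
    (hb : X i ≠ X (i - 1)) (hm : X i = X (i + 1)) :
    Bd n (Function.update X i (!(X i))) = insert i ((Bd n X).erase (i-1)) := by
  have hb' := bool_ne hb
  ext j
  simp only [Bd, Finset.mem_filter, Finset.mem_erase, Finset.mem_insert, Finset.mem_range]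
  by_cases hji : j = i
  · subst hji
    rw [Function.update_self, Function.update_of_ne (by omega : j + 1 ≠ j), ← hm]
    simp [hin]
  · by_cases hji1 : j = i - 1
    · subst hji1
      have hh : i - 1 + 1 = i := by omega
      rw [Function.update_of_ne (by omega : i - 1 ≠ i), hh, Function.update_self, hb']
      simp
      omega
    · rw [Function.update_of_ne hji, Function.update_of_ne (by omega : j + 1 ≠ i)]
      tauto

lemma mem_Bd_pred (h1 : 1 ≤ i) (h2 : i < n) (hb : X i ≠ X (i - 1)) :
    i - 1 ∈ Bd n X := by
  have hh : i - 1 + 1 = i := by omega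
  simp only [Bd, Finset.mem_filter, Finset.mem_range, hh]
  exact ⟨by omega, fun h => hb h.symm⟩

lemma mem_Bd_self (hin : i < n - 1) (hm : X i ≠ X (i + 1)) : i ∈ Bd n X := by
  simp only [Bd, Finset.mem_filter, Finset.mem_range]
  exact ⟨hin, hm⟩

/-- rho of a middle-run flip -/
lemma rho_update_middle (h1 : 1 ≤ i) (hin : i < n - 1)
    (hb : X i ≠ X (i - 1)) (hm : X i ≠ X (i + 1)) :
    rho n (Function.update X i (!(X i))) + 2 = rho n X := by
  have e := Bd_update_middle (n := n) h1 hin hb hm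
  have m1 : i - 1 ∈ Bd n X := mem_Bd_pred h1 (by omega) hb
  have m2 : i ∈ (Bd n X).erase (i-1) :=
    Finset.mem_erase.2 ⟨by omega, mem_Bd_self hin hm⟩
  have hc1 : 1 ≤ (Bd n X).card := Finset.card_pos.2 ⟨_, m1⟩
  have hc2 : 1 ≤ ((Bd n X).erase (i-1)).card := Finset.card_pos.2 ⟨_, m2⟩
  have he1 : ((Bd n X).erase (i-1)).card = (Bd n X).card - 1 :=
    Finset.card_erase_of_mem m1
  have he2 : (((Bd n X).erase (i-1)).erase i).card = ((Bd n X).erase (i-1)).card - 1 :=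
    Finset.card_erase_of_mem m2
  rw [rho_eq, rho_eq, e, he2, he1]
  omega

/-- rho of a non-middle flip: stays or drops by 1 -/
lemma rho_update_other (h1 : 1 ≤ i) (h2 : i < n)
    (hb : X i ≠ X (i - 1)) (hnm : ¬ (i < n - 1 ∧ X i ≠ X (i + 1))) :
    rho n X ≤ rho n (Function.update X i (!(X i))) + 1 ∧
      rho n (Function.update X i (!(X i))) ≤ rho n X := by
  have m1 : i - 1 ∈ Bd n X := mem_Bd_pred h1 h2 hb
  have hc : 1 ≤ (Bd n X).card := Finset.card_pos.2 ⟨_, m1⟩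
  by_cases hin : i < n - 1
  · have hm : X i = X (i + 1) := by
      by_contra h; exact hnm ⟨hin, h⟩
    have e := Bd_update_move (n := n) h1 hin hb hm
    have hni : i ∉ (Bd n X).erase (i-1) := by
      simp only [Bd, Finset.mem_erase, Finset.mem_filter, Finset.mem_range]
      rintro ⟨-, -, h⟩; exact h hm
    have he1 : ((Bd n X).erase (i-1)).card = (Bd n X).card - 1 :=
      Finset.card_erase_of_mem m1
    rw [rho_eq, rho_eq, e, Finset.card_insert_of_notMem hni, he1]
    omega
  · have e := Bd_update_last (n := n) h1 h2 hin hb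
    rw [rho_eq, rho_eq, e, Finset.card_erase_of_mem m1]
    omega

lemma Md_update_subset (h1 : 1 ≤ i) (hb : X i ≠ X (i - 1)) :
    Md n (Function.update X i (!(X i))) ⊆ insert (i+1) (Md n X) := by
  have hb' := bool_ne hb
  intro j hj
  simp only [Md, Finset.mem_filter, Finset.mem_Icc] at hj
  obtain ⟨⟨hj1, hj2⟩, hq1, hq2⟩ := hj
  simp only [Finset.mem_insert, Md, Finset.mem_filter, Finset.mem_Icc]
  by_cases e1 : j = i + 1
  · exact Or.inl e1
  by_cases e2 : j = i
  · exfalso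
    subst e2
    have w1 : Function.update X j (!X j) (j-1) = X (j-1) :=
      Function.update_of_ne (by omega) _ _
    have w2 : Function.update X j (!X j) j = !X j := Function.update_self _ _ _
    simp only [w1, w2, hb'] at hq1
    exact hq1 rfl
  by_cases e3 : j = i - 1
  · exfalso
    subst e3
    have hij : i - 1 + 1 = i := by omega
    have w2 : Function.update X i (!X i) (i-1) = X (i-1) :=
      Function.update_of_ne (by omega) _ _
    have w3 : Function.update X i (!X i) (i - 1 + 1) = !X i := by
      rw [hij]; exact Function.update_self _ _ _
    simp only [w2, w3, hb'] at hq2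
    exact hq2 rfl
  · have w1 : Function.update X i (!X i) (j-1) = X (j-1) :=
      Function.update_of_ne (by omega) _ _
    have w2 : Function.update X i (!X i) j = X j := Function.update_of_ne e2 _ _
    have w3 : Function.update X i (!X i) (j+1) = X (j+1) :=
      Function.update_of_ne (by omega) _ _
    simp only [w1, w2, w3] at hq1 hq2
    exact Or.inr ⟨⟨hj1, hj2⟩, hq1, hq2⟩

lemma Md_update_middle_subset (h1 : 1 ≤ i) (hin : i < n - 1)
    (hb : X i ≠ X (i - 1)) (hm : X i ≠ X (i + 1)) :
    Md n (Function.update X i (!(X i))) ⊆ (Md n X).erase i := by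
  have hb' := bool_ne hb
  have hm' := bool_ne hm
  intro j hj
  simp only [Md, Finset.mem_filter, Finset.mem_Icc] at hj
  obtain ⟨⟨hj1, hj2⟩, hq1, hq2⟩ := hj
  simp only [Finset.mem_erase, Md, Finset.mem_filter, Finset.mem_Icc]
  by_cases e2 : j = i
  · exfalso
    subst e2
    have w1 : Function.update X j (!X j) (j-1) = X (j-1) :=
      Function.update_of_ne (by omega) _ _
    have w2 : Function.update X j (!X j) j = !X j := Function.update_self _ _ _
    simp only [w1, w2, hb'] at hq1
    exact hq1 rfl
  by_cases e1 : j = i + 1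
  · exfalso
    subst e1
    have w1 : Function.update X i (!X i) (i + 1 - 1) = !X i := by
      rw [(by omega : i + 1 - 1 = i)]; exact Function.update_self _ _ _
    have w2 : Function.update X i (!X i) (i+1) = X (i+1) :=
      Function.update_of_ne (by omega) _ _
    simp only [w1, w2, hm'] at hq1
    exact hq1 rfl
  by_cases e3 : j = i - 1
  · exfalso
    subst e3
    have hij : i - 1 + 1 = i := by omega
    have w2 : Function.update X i (!X i) (i-1) = X (i-1) :=
      Function.update_of_ne (by omega) _ _
    have w3 : Function.update X i (!X i) (i - 1 + 1) = !X i := by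
      rw [hij]; exact Function.update_self _ _ _
    simp only [w2, w3, hb'] at hq2
    exact hq2 rfl
  · have w1 : Function.update X i (!X i) (j-1) = X (j-1) :=
      Function.update_of_ne (by omega) _ _
    have w2 : Function.update X i (!X i) j = X j := Function.update_of_ne e2 _ _
    have w3 : Function.update X i (!X i) (j+1) = X (j+1) :=
      Function.update_of_ne (by omega) _ _
    simp only [w1, w2, w3] at hq1 hq2
    exact ⟨e2, ⟨hj1, hj2⟩, hq1, hq2⟩

lemma mem_Md_self (h1 : 1 ≤ i) (hin : i < n - 1)
    (hb : X i ≠ X (i - 1)) (hm : X i ≠ X (i + 1)) : i ∈ Md n X := by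
  simp only [Md, Finset.mem_filter, Finset.mem_Icc]
  exact ⟨⟨h1, by omega⟩, fun h => hb h.symm, hm⟩

lemma mu_update_le (h1 : 1 ≤ i) (hb : X i ≠ X (i - 1)) :
    mu n (Function.update X i (!(X i))) ≤ mu n X + 1 := by
  rw [mu_eq, mu_eq]
  calc (Md n (Function.update X i (!(X i)))).card
      ≤ (insert (i+1) (Md n X)).card := Finset.card_le_card (Md_update_subset h1 hb)
    _ ≤ (Md n X).card + 1 := Finset.card_insert_le _ _

lemma mu_update_middle (h1 : 1 ≤ i) (hin : i < n - 1)
    (hb : X i ≠ X (i - 1)) (hm : X i ≠ X (i + 1)) :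
    mu n (Function.update X i (!(X i))) + 1 ≤ mu n X := by
  rw [mu_eq, mu_eq]
  have hmem := mem_Md_self h1 hin hb hm
  have h := Finset.card_le_card (Md_update_middle_subset h1 hin hb hm)
  rw [Finset.card_erase_of_mem hmem] at h
  have : 1 ≤ (Md n X).card := Finset.card_pos.2 ⟨_, hmem⟩
  omega


lemma ext_flip (n : ℕ) (x : Fin n → Bool) (i : ℕ) (hi : i < n) :
    ext n (fun j : Fin n => if (j : ℕ) = i then !(x j) else x j)
      = Function.update (ext n x) i (!(ext n x i)) := by
  funext j
  by_cases hj : j < n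
  · by_cases e : j = i
    · subst e
      rw [Function.update_self]
      simp only [ext, dif_pos hj]
      simp
    · rw [Function.update_of_ne e]
      simp only [ext, dif_pos hj]
      simp [e]
  · rw [Function.update_of_ne (show j ≠ i by omega)]
    simp only [ext, dif_neg hj]

lemma rho_pos (n : ℕ) (x : ℕ → Bool) : 1 ≤ rho n x := by
  rw [rho_eq]; omega

lemma wt_ge (nn : ℕ) (y : Fin nn → Bool) (Mb : ℕ) (hM : mu nn (ext nn y) ≤ Mb) :
    1 / (rho nn (ext nn y) : ℝ) - (Mb : ℝ) / (rho nn (ext nn y) : ℝ) ^ 3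
      ≤ wt nn y := by
  have hρ : (1 : ℝ) ≤ (rho nn (ext nn y) : ℝ) := by
    exact_mod_cast rho_pos nn (ext nn y)
  have hρ0 : (0 : ℝ) < (rho nn (ext nn y) : ℝ) := by linarith
  rw [wt]
  split_ifs with h
  · have : (0:ℝ) ≤ (Mb : ℝ) / (rho nn (ext nn y) : ℝ) ^ 3 := by positivity
    linarith
  · have he : (1 / (rho nn (ext nn y) : ℝ)) *
        (1 - (mu nn (ext nn y) : ℝ) / (rho nn (ext nn y) : ℝ) ^ 2)
        = 1 / (rho nn (ext nn y) : ℝ)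
          - (mu nn (ext nn y) : ℝ) / (rho nn (ext nn y) : ℝ) ^ 3 := by
      field_simp
    rw [he]
    clear he
    have : (mu nn (ext nn y) : ℝ) / (rho nn (ext nn y) : ℝ) ^ 3
        ≤ (Mb : ℝ) / (rho nn (ext nn y) : ℝ) ^ 3 := by
      have hmm : (mu nn (ext nn y) : ℝ) ≤ (Mb : ℝ) := by exact_mod_cast hM
      gcongr
    linarith

lemma wt_eq_of_mu_le_one (nn : ℕ) (y : Fin nn → Bool) (h : mu nn (ext nn y) ≤ 1) :
    wt nn y = 1 / (rho nn (ext nn y) : ℝ) := by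
  rw [wt, if_pos h]

lemma F_card (n : ℕ) (x : ℕ → Bool) :
    ((Finset.Ico 1 n).filter (fun i => x i ≠ x (i - 1))).card + 1 = rho n x := by
  rw [rho_eq]
  have : ((Finset.Ico 1 n).filter (fun i => x i ≠ x (i - 1))).card = (Bd n x).card := by
    apply Finset.card_bij (fun i _ => i - 1)
    · intro a ha
      simp only [Finset.mem_filter, Finset.mem_Ico] at ha
      obtain ⟨⟨ha1, ha2⟩, ha3⟩ := ha
      have hh : a - 1 + 1 = a := by omega
      simp only [Bd, Finset.mem_filter, Finset.mem_range, hh]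
      exact ⟨by omega, fun h => ha3 h.symm⟩
    · intro a ha b hb h
      simp only [Finset.mem_filter, Finset.mem_Ico] at ha hb
      omega
    · intro b hb
      simp only [Bd, Finset.mem_filter, Finset.mem_range] at hb
      refine ⟨b + 1, ?_, by omega⟩
      simp only [Finset.mem_filter, Finset.mem_Ico]
      have hh : b + 1 - 1 = b := by omega
      rw [hh]
      exact ⟨⟨by omega, by omega⟩, fun h => hb.2 h.symm⟩
  omega

lemma FA_eq (n : ℕ) (x : ℕ → Bool) :
    ((Finset.Ico 1 n).filter (fun i => x i ≠ x (i - 1))).filter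
        (fun i => i < n - 1 ∧ x i ≠ x (i + 1)) = Md n x := by
  ext i
  simp only [Finset.mem_filter, Finset.mem_Ico, Md, Finset.mem_Icc]
  constructor
  · rintro ⟨⟨⟨h1, h2⟩, h3⟩, h4, h5⟩
    exact ⟨⟨h1, by omega⟩, fun h => h3 h.symm, h5⟩
  · rintro ⟨⟨h1, h2⟩, h3, h4⟩
    have hn3 : 3 ≤ n := by omega
    exact ⟨⟨⟨h1, by omega⟩, fun h => h3 h.symm⟩, by omega, h4⟩

lemma mu_add_two_le_rho (n : ℕ) (x : ℕ → Bool) (hm : 1 ≤ mu n x) :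
    mu n x + 2 ≤ rho n x := by
  rw [mu_eq] at hm ⊢
  rw [rho_eq]
  have hne : (Md n x).Nonempty := Finset.card_pos.1 hm
  set i0 := (Md n x).min' hne with hi0
  have hi0m : i0 ∈ Md n x := (Md n x).min'_mem hne
  have hMsub : Md n x ⊆ Bd n x := by
    intro i hi
    simp only [Md, Finset.mem_filter, Finset.mem_Icc] at hi
    obtain ⟨⟨h1, h2⟩, h3, h4⟩ := hi
    simp only [Bd, Finset.mem_filter, Finset.mem_range]
    exact ⟨by omega, h4⟩
  have hi0Md : 1 ≤ i0 ∧ i0 ≤ n - 2 ∧ x (i0 - 1) ≠ x i0 := by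
    have := hi0m
    simp only [Md, Finset.mem_filter, Finset.mem_Icc] at this
    exact ⟨this.1.1, this.1.2, this.2.1⟩
  have hpred : i0 - 1 ∈ Bd n x := by
    have hh : i0 - 1 + 1 = i0 := by omega
    simp only [Bd, Finset.mem_filter, Finset.mem_range, hh]
    exact ⟨by omega, hi0Md.2.2⟩
  have hnotin : i0 - 1 ∉ Md n x := by
    intro h
    have := (Md n x).min'_le _ h
    omega
  have hsub : insert (i0 - 1) (Md n x) ⊆ Bd n x := by
    intro j hj
    rcases Finset.mem_insert.1 hj with rfl | hj
    · exact hpred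
    · exact hMsub hj
  have hcard := Finset.card_le_card hsub
  rw [Finset.card_insert_of_notMem hnotin] at hcard
  omega
lemma aux_poly (u v : ℝ) (hu : 0 ≤ u) (hv : 0 ≤ v) :
    (1+u)*u*(3+u+v)*(2+u+v)^3 + (2+v)*(2+u)*(3+u+v)*(1+u+v)^3
      ≤ 2*(1+u)*(1+u+v)^2*(2+u+v)^3 := by
  nlinarith [mul_nonneg hu (sq_nonneg (u-1)), sq_nonneg (2*u-1), hu, pow_nonneg hu 4, hv, pow_nonneg hv 2, pow_nonneg hv 3, mul_nonneg (hu) (hv), mul_nonneg (hu) (pow_nonneg hv 2), mul_nonneg (hu) (pow_nonneg hv 3), mul_nonneg (hu) (pow_nonneg hv 4), mul_nonneg (hu) (pow_nonneg hv 5), mul_nonneg (pow_nonneg hu 2) (hv), mul_nonneg (pow_nonneg hu 2) (pow_nonneg hv 2), mul_nonneg (pow_nonneg hu 2) (pow_nonneg hv 3), mul_nonneg (pow_nonneg hu 2) (pow_nonneg hv 4), mul_nonneg (pow_nonneg hu 3) (hv), mul_nonneg (pow_nonneg hu 3) (pow_nonneg hv 2), mul_nonneg (pow_nonneg hu 3)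 (pow_nonneg hv 3), mul_nonneg (pow_nonneg hu 4) (hv), mul_nonneg (pow_nonneg hu 4) (pow_nonneg hv 2), pow_nonneg hu 5, mul_nonneg (pow_nonneg hu 5) (hv), pow_nonneg hu 6]

lemma arith_main (r m : ℝ) (hm : 1 ≤ m) (hr : m + 2 ≤ r) :
    1 ≤ m*(1/(r-2) - (m-1)/(r-2)^3) + (r-m)*(1/r - (m+1)/(r-1)^3) := by
  have h2 : (0:ℝ) < r - 2 := by linarith
  have h1 : (0:ℝ) < r - 1 := by linarith
  have h0 : (0:ℝ) < r := by linarith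
  have key := aux_poly (m-1) (r-m-2) (by linarith) (by linarith)
  rw [← sub_nonneg]
  have heq : m*(1/(r-2) - (m-1)/(r-2)^3) + (r-m)*(1/r - (m+1)/(r-1)^3) - 1
      = (2*m*(r-2)^2*(r-1)^3 - (m*(m-1)*r*(r-1)^3 + (r-m)*(m+1)*r*(r-2)^3))
        / (r*(r-2)^3*(r-1)^3) := by
    field_simp
    ring
  rw [heq]
  apply div_nonneg _ (by positivity)
  nlinarith [key]


/-- **Improved fractional transversal for the single grain-error channel.**
For every `x ∈ {0,1}^n`, `∑_{y ∈ B_{G,1}(x)} w_y ≥ 1`, where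
`w_y = 1/ρ(y)` if `μ(y) ≤ 1` and `w_y = (1/ρ(y))(1 - μ(y)/ρ(y)²)` otherwise. -/
theorem grain_fractional_transversal (n : ℕ) (hn : 1 ≤ n) :
    ∀ x : Fin n → Bool, 1 ≤ ∑ y ∈ ballG n x, wt n y := by
  intro x
  classical
  simp only [ballG]
  have hFmem : ∀ i ∈ (Finset.Ico 1 n).filter
      (fun i => ext n x i ≠ ext n x (i - 1)),
      1 ≤ i ∧ i < n ∧ ext n x i ≠ ext n x (i - 1) := by
    intro i hi
    simp only [Finset.mem_filter, Finset.mem_Ico] at hi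
    exact ⟨hi.1.1, hi.1.2, hi.2⟩
  set F := (Finset.Ico 1 n).filter (fun i => ext n x i ≠ ext n x (i - 1)) with hFdef
  have hxnot : x ∉ F.image
      (fun i => fun j : Fin n => if (j : ℕ) = i then !(x j) else x j) := by
    intro h
    obtain ⟨i, hi, heq⟩ := Finset.mem_image.1 h
    obtain ⟨h1, h2, h3⟩ := hFmem i hi
    have hc := congrFun heq ⟨i, h2⟩
    simp at hc
  have hinj : ∀ i ∈ F, ∀ i' ∈ F,
      (fun j : Fin n => if (j : ℕ) = i then !(x j) else x j)
        = (fun j : Fin n => if (j : ℕ) = i' then !(x j) else x j) → i = i' := by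
    intro i hi i' hi' h
    by_contra hne
    obtain ⟨h1, h2, h3⟩ := hFmem i hi
    have hc := congrFun h ⟨i, h2⟩
    simp [hne] at hc
  rw [Finset.sum_insert hxnot, Finset.sum_image hinj]
  have hrF : F.card + 1 = rho n (ext n x) := F_card n (ext n x)
  have hr1 : 1 ≤ rho n (ext n x) := rho_pos _ _
  have hext : ∀ i ∈ F,
      ext n (fun j : Fin n => if (j : ℕ) = i then !(x j) else x j)
        = Function.update (ext n x) i (!(ext n x i)) :=
    fun i hi => ext_flip n x i (hFmem i hi).2.1
  rw [← Finset.sum_filter_add_sum_filter_not F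
    (fun i => i < n - 1 ∧ ext n x i ≠ ext n x (i + 1))
    (fun i => wt n (fun j : Fin n => if (j : ℕ) = i then !(x j) else x j))]
  have hFAcard : (F.filter
      (fun i => i < n - 1 ∧ ext n x i ≠ ext n x (i + 1))).card = mu n (ext n x) := by
    rw [hFdef, FA_eq, ← mu_eq]
  have hcards := Finset.card_filter_add_card_filter_not
    (s := F) (p := fun i => i < n - 1 ∧ ext n x i ≠ ext n x (i + 1))
  rcases Nat.eq_zero_or_pos (mu n (ext n x)) with hm0 | hmpos
  · -- m = 0 case
    have hFAempty : F.filter (fun i => i < n - 1 ∧ ext n x i ≠ ext n x (i + 1)) = ∅ :=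
      Finset.card_eq_zero.1 (by rw [hFAcard, hm0])
    rw [hFAempty, Finset.sum_empty]
    have hwx : wt n x = 1 / (rho n (ext n x) : ℝ) :=
      wt_eq_of_mu_le_one n x (by omega)
    have hB : ∀ i ∈ F.filter
        (fun i => ¬(i < n - 1 ∧ ext n x i ≠ ext n x (i + 1))),
        1 / (rho n (ext n x) : ℝ)
          ≤ wt n (fun j : Fin n => if (j : ℕ) = i then !(x j) else x j) := by
      intro i hiB
      have hiF : i ∈ F := (Finset.mem_filter.1 hiB).1
      have hnm := (Finset.mem_filter.1 hiB).2
      obtain ⟨h1, h2, h3⟩ := hFmem i hiF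
      have hex := hext i hiF
      have hro := rho_update_other h1 h2 h3 hnm
      have hmu : mu n (Function.update (ext n x) i (!(ext n x i)))
          ≤ mu n (ext n x) + 1 := mu_update_le h1 h3
      have hwt := wt_eq_of_mu_le_one n
        (fun j : Fin n => if (j : ℕ) = i then !(x j) else x j)
        (by rw [hex]; omega)
      rw [hwt, hex]
      have hpos : 1 ≤ rho n (Function.update (ext n x) i (!(ext n x i))) := rho_pos _ _
      apply one_div_le_one_div_of_le
      · exact_mod_cast hpos
      · exact_mod_cast hro.2
    have hsum := Finset.card_nsmul_le_sum
      (F.filter (fun i => ¬(i < n - 1 ∧ ext n x i ≠ ext n x (i + 1))))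
      (fun i => wt n (fun j : Fin n => if (j : ℕ) = i then !(x j) else x j))
      (1 / (rho n (ext n x) : ℝ)) hB
    rw [nsmul_eq_mul] at hsum
    have hFBcard : ((F.filter
        (fun i => ¬(i < n - 1 ∧ ext n x i ≠ ext n x (i + 1)))).card : ℝ)
        = (rho n (ext n x) : ℝ) - 1 := by
      have : (F.filter
          (fun i => ¬(i < n - 1 ∧ ext n x i ≠ ext n x (i + 1)))).card + 1
          = rho n (ext n x) := by omega
      push_cast [← this]
      ring
    rw [hFBcard] at hsum
    have hrR : (1:ℝ) ≤ (rho n (ext n x) : ℝ) := by exact_mod_cast hr1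
    have hid : ((rho n (ext n x) : ℝ) - 1) * (1 / (rho n (ext n x) : ℝ))
        + 1 / (rho n (ext n x) : ℝ) = 1 := by
      field_simp
      ring
    rw [hwx]
    linarith
  · -- m ≥ 1 case
    have hm2r : mu n (ext n x) + 2 ≤ rho n (ext n x) :=
      mu_add_two_le_rho n (ext n x) hmpos
    have hmR : (1:ℝ) ≤ (mu n (ext n x) : ℝ) := by exact_mod_cast hmpos
    have hrR : (mu n (ext n x) : ℝ) + 2 ≤ (rho n (ext n x) : ℝ) := by
      exact_mod_cast hm2r
    have harith := arith_main (rho n (ext n x) : ℝ) (mu n (ext n x) : ℝ) hmR hrR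
    -- bound on FA elements
    have hAb : ∀ i ∈ F.filter (fun i => i < n - 1 ∧ ext n x i ≠ ext n x (i + 1)),
        1 / ((rho n (ext n x) : ℝ) - 2)
          - ((mu n (ext n x) : ℝ) - 1) / ((rho n (ext n x) : ℝ) - 2) ^ 3
          ≤ wt n (fun j : Fin n => if (j : ℕ) = i then !(x j) else x j) := by
      intro i hiA
      have hiF : i ∈ F := (Finset.mem_filter.1 hiA).1
      obtain ⟨hc1, hc2⟩ := (Finset.mem_filter.1 hiA).2
      obtain ⟨h1, h2, h3⟩ := hFmem i hiF
      have hex := hext i hiF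
      have hro : rho n (Function.update (ext n x) i (!(ext n x i))) + 2
          = rho n (ext n x) := rho_update_middle h1 hc1 h3 hc2
      have hmu : mu n (Function.update (ext n x) i (!(ext n x i))) + 1
          ≤ mu n (ext n x) := mu_update_middle h1 hc1 h3 hc2
      have hb := wt_ge n (fun j : Fin n => if (j : ℕ) = i then !(x j) else x j)
        (mu n (ext n x) - 1) (by rw [hex]; omega)
      rw [hex] at hb
      have e1 : ((rho n (Function.update (ext n x) i (!(ext n x i)))) : ℝ)
          = (rho n (ext n x) : ℝ) - 2 := by
        push_cast [← hro]
        ring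
      have e2 : ((mu n (ext n x) - 1 : ℕ) : ℝ) = (mu n (ext n x) : ℝ) - 1 := by
        push_cast [Nat.cast_sub hmpos]
        ring
      rw [e1, e2] at hb
      exact hb
    -- bound on FB elements
    have hBb : ∀ i ∈ F.filter (fun i => ¬(i < n - 1 ∧ ext n x i ≠ ext n x (i + 1))),
        1 / (rho n (ext n x) : ℝ)
          - ((mu n (ext n x) : ℝ) + 1) / ((rho n (ext n x) : ℝ) - 1) ^ 3
          ≤ wt n (fun j : Fin n => if (j : ℕ) = i then !(x j) else x j) := by
      intro i hiB
      have hiF : i ∈ F := (Finset.mem_filter.1 hiB).1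
      have hnm := (Finset.mem_filter.1 hiB).2
      obtain ⟨h1, h2, h3⟩ := hFmem i hiF
      have hex := hext i hiF
      have hro := rho_update_other h1 h2 h3 hnm
      have hmu : mu n (Function.update (ext n x) i (!(ext n x i)))
          ≤ mu n (ext n x) + 1 := mu_update_le h1 h3
      have hb := wt_ge n (fun j : Fin n => if (j : ℕ) = i then !(x j) else x j)
        (mu n (ext n x) + 1) (by rw [hex]; omega)
      rw [hex] at hb
      have hρ1 : (1:ℝ) ≤ ((rho n (Function.update (ext n x) i (!(ext n x i)))) : ℝ) := by
        exact_mod_cast rho_pos _ _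
      have hρle : ((rho n (Function.update (ext n x) i (!(ext n x i)))) : ℝ)
          ≤ (rho n (ext n x) : ℝ) := by exact_mod_cast hro.2
      have hρge : (rho n (ext n x) : ℝ) - 1
          ≤ ((rho n (Function.update (ext n x) i (!(ext n x i)))) : ℝ) := by
        have := hro.1
        have : (rho n (ext n x) : ℝ)
            ≤ ((rho n (Function.update (ext n x) i (!(ext n x i)))) : ℝ) + 1 := by
          exact_mod_cast this
        linarith
      have hrm1 : (0:ℝ) < (rho n (ext n x) : ℝ) - 1 := by linarith
      have t1 : 1 / (rho n (ext n x) : ℝ)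
          ≤ 1 / ((rho n (Function.update (ext n x) i (!(ext n x i)))) : ℝ) := by
        apply one_div_le_one_div_of_le (by linarith) hρle
      have t2 : (((mu n (ext n x) : ℝ)) + 1)
            / ((rho n (Function.update (ext n x) i (!(ext n x i)))) : ℝ) ^ 3
          ≤ ((mu n (ext n x) : ℝ) + 1) / ((rho n (ext n x) : ℝ) - 1) ^ 3 := by
        gcongr <;> linarith
      push_cast at hb
      linarith
    -- x itself
    have hXb : 1 / (rho n (ext n x) : ℝ)
        - ((mu n (ext n x) : ℝ) + 1) / ((rho n (ext n x) : ℝ) - 1) ^ 3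
        ≤ wt n x := by
      have hb := wt_ge n x (mu n (ext n x)) le_rfl
      have hrm1 : (0:ℝ) < (rho n (ext n x) : ℝ) - 1 := by
        have : (2:ℝ) ≤ (rho n (ext n x) : ℝ) := by linarith
        linarith
      have t2 : (mu n (ext n x) : ℝ) / (rho n (ext n x) : ℝ) ^ 3
          ≤ ((mu n (ext n x) : ℝ) + 1) / ((rho n (ext n x) : ℝ) - 1) ^ 3 := by
        gcongr
        · linarith
        · linarith
      linarith
    -- sums
    have hsA := Finset.card_nsmul_le_sum
      (F.filter (fun i => i < n - 1 ∧ ext n x i ≠ ext n x (i + 1)))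
      (fun i => wt n (fun j : Fin n => if (j : ℕ) = i then !(x j) else x j))
      _ hAb
    have hsB := Finset.card_nsmul_le_sum
      (F.filter (fun i => ¬(i < n - 1 ∧ ext n x i ≠ ext n x (i + 1))))
      (fun i => wt n (fun j : Fin n => if (j : ℕ) = i then !(x j) else x j))
      _ hBb
    rw [nsmul_eq_mul, hFAcard] at hsA
    rw [nsmul_eq_mul] at hsB
    have hFBcard : ((F.filter
        (fun i => ¬(i < n - 1 ∧ ext n x i ≠ ext n x (i + 1)))).card : ℝ)
        = (rho n (ext n x) : ℝ) - 1 - (mu n (ext n x) : ℝ) := by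
      have hh : mu n (ext n x) + (F.filter
          (fun i => ¬(i < n - 1 ∧ ext n x i ≠ ext n x (i + 1)))).card + 1
          = rho n (ext n x) := by omega
      push_cast [← hh]
      ring
    rw [hFBcard] at hsB
    linarith
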